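/- arXiv:2408.08715 — 2 statements merged into one kernel-verified Lean document; each statement's English description precedes it below -/
import Mathlib

section
/- Let f(x) be a monic polynomial of degree n with rational coefficients, with complex roots α₁, ..., αₙ. Then the polynomial g(x) = (2x)^n · f((x + x⁻¹)/2) equals the product over j of (x² - 2αⱼx + 1), and every root of f is the real part of some root of unity if and only if g is a product of cyclotomic polynomials. -/
open Polynomial

/-- A monic rational polynomial all of whose complex roots are roots of unity
is a product of cyclotomic polynomials. -/
lemma aux_cyclo : ∀ (d : ℕ) (h : Polynomial ℚ), h.natDegree = d → h.Monic →
    (∀ z : ℂ, (h.map (algebraMap ℚ ℂ)).IsRoot z → ∃ m : ℕ, 0 < m ∧ z ^ m = 1) →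
    ∃ S : Multiset ℕ, (∀ m ∈ S, 0 < m) ∧
      h = (S.map (fun m => Polynomial.cyclotomic m ℚ)).prod := by
  intro d
  induction d using Nat.strong_induction_on with
  | _ d ih =>
    intro h hd hmon hroot
    rcases Nat.eq_zero_or_pos d with hd0 | hdpos
    · refine ⟨0, by simp, ?_⟩
      simp [hmon.natDegree_eq_zero.mp (hd ▸ hd0)]
    · have hdegpos : 0 < (h.map (algebraMap ℚ ℂ)).degree := by
        rw [degree_map]
        exact natDegree_pos_iff_degree_pos.mp (by omega)
      obtain ⟨z, hz⟩ := Complex.exists_root hdegpos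
      obtain ⟨m, hm, hzm⟩ := hroot z hz
      have hfin : IsOfFinOrder z := isOfFinOrder_iff_pow_eq_one.mpr ⟨m, hm, hzm⟩
      have hk : 0 < orderOf z := hfin.orderOf_pos
      have hmin : cyclotomic (orderOf z) ℚ = minpoly ℚ z :=
        cyclotomic_eq_minpoly_rat (IsPrimitiveRoot.orderOf z) hk
      have hdvd : minpoly ℚ z ∣ h :=
        minpoly.dvd ℚ z (by rw [aeval_def, ← eval_map]; exact hz)
      rw [← hmin] at hdvd
      obtain ⟨h', rfl⟩ := hdvd
      have hcm : (cyclotomic (orderOf z) ℚ).Monic := cyclotomic.monic _ ℚ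
      have hmon' : h'.Monic := hcm.of_mul_monic_left hmon
      have hdeg' : h'.natDegree < d := by
        have := Monic.natDegree_mul hcm hmon'
        rw [hd] at this
        rw [natDegree_cyclotomic] at this
        have := Nat.totient_pos.mpr hk
        omega
      have hroot' : ∀ w : ℂ, (h'.map (algebraMap ℚ ℂ)).IsRoot w →
          ∃ m : ℕ, 0 < m ∧ w ^ m = 1 := by
        intro w hw
        apply hroot w
        have hw' : eval w (h'.map (algebraMap ℚ ℂ)) = 0 := hw
        show eval w _ = 0
        rw [Polynomial.map_mul, eval_mul, hw', mul_zero]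
      obtain ⟨S, hS, hSeq⟩ := ih h'.natDegree hdeg' h' rfl hmon' hroot'
      refine ⟨orderOf z ::ₘ S, ?_, ?_⟩
      · intro m' hm'
        rcases Multiset.mem_cons.mp hm' with rfl | hmem
        · exact hk
        · exact hS m' hmem
      · rw [Multiset.map_cons, Multiset.prod_cons, ← hSeq]

theorem transform_poly_real_parts_roots_of_unity
    (n : ℕ) (f : Polynomial ℚ) (hf : f.Monic) (hdeg : f.natDegree = n)
    (α : Fin n → ℂ)
    (hroots : f.map (algebraMap ℚ ℂ) = ∏ j : Fin n, (X - C (α j)))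
    (g : Polynomial ℂ)
    (hg : g = ∏ j : Fin n, (X ^ 2 - C (2 * α j) * X + 1)) :
    (∀ z : ℂ, z ≠ 0 →
        (2 * z) ^ n * (f.map (algebraMap ℚ ℂ)).eval ((z + z⁻¹) / 2) = g.eval z) ∧
    ((∀ j : Fin n, ∃ (z : ℂ) (m : ℕ), 0 < m ∧ z ^ m = 1 ∧ α j = (z + (starRingEnd ℂ) z) / 2)
      ↔ ∃ S : Multiset ℕ, (∀ m ∈ S, 0 < m) ∧
          g = (S.map (fun m => Polynomial.cyclotomic m ℂ)).prod) := by
  have key1 : ∀ z : ℂ, z ≠ 0 →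
      (2 * z) ^ n * (f.map (algebraMap ℚ ℂ)).eval ((z + z⁻¹) / 2) = g.eval z := by
    intro z hz
    rw [hroots, hg, Polynomial.eval_prod, Polynomial.eval_prod]
    have hcard : (2*z)^n = ∏ _j : Fin n, (2*z) := by
      simp [Finset.prod_const]
    rw [hcard, ← Finset.prod_mul_distrib]
    refine Finset.prod_congr rfl fun j _ => ?_
    simp only [eval_sub, eval_add, eval_mul, eval_pow, eval_X, eval_C, eval_one]
    field_simp
    ring
  -- the rational polynomial h with h.map ℂ = g
  set h : Polynomial ℚ :=
    ∑ k ∈ Finset.range (n+1), C (f.coeff k * 2^(n-k)) * (X^2+1)^k * X^(n-k) with hhdef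
  have hmapeval : ∀ z : ℂ, z ≠ 0 →
      eval z (h.map (algebraMap ℚ ℂ)) =
      (2 * z) ^ n * (f.map (algebraMap ℚ ℂ)).eval ((z + z⁻¹) / 2) := by
    intro z hz
    have hz2 : (2 : ℂ) * z ≠ 0 := by simp [hz]
    have hmap : (f.map (algebraMap ℚ ℂ)).natDegree = n := by
      rw [natDegree_map, hdeg]
    conv_rhs => rw [Polynomial.eval_eq_sum_range]
    rw [hmap, hhdef]
    rw [Polynomial.map_sum]
    simp only [Polynomial.map_mul, Polynomial.map_pow, Polynomial.map_add, map_C,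
      Polynomial.map_X, Polynomial.map_one, eval_finset_sum, eval_mul, eval_pow,
      eval_add, eval_X, eval_C, eval_one, coeff_map]
    rw [Finset.mul_sum]
    refine Finset.sum_congr rfl fun k hk => ?_
    have hk' : k ≤ n := Nat.lt_succ_iff.mp (Finset.mem_range.mp hk)
    have hsplit : ((2:ℂ)*z)^n = (2*z)^(n-k) * (2*z)^k := by
      rw [← pow_add, Nat.sub_add_cancel hk']
    have hpt : (z + z⁻¹)/2 = (z^2+1)/(2*z) := by
      field_simp
    rw [hsplit, hpt, div_pow, map_mul, map_pow]
    have h2 : (algebraMap ℚ ℂ) 2 = 2 := by norm_num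
    rw [h2, mul_pow]
    field_simp
  have hgh : h.map (algebraMap ℚ ℂ) = g := by
    apply Polynomial.eq_of_infinite_eval_eq
    refine ((Set.finite_singleton (0:ℂ)).infinite_compl).mono ?_
    intro z hz
    have hz' : z ≠ 0 := by simpa using hz
    exact (hmapeval z hz').trans (key1 z hz')
  have hmonic_g : g.Monic := by
    rw [hg]
    apply monic_prod_of_monic
    intro j _
    have : (X^2 - C (2*α j)*X + 1 : Polynomial ℂ) = X^2 + (1 - C (2*α j)*X) := by ring
    rw [this]
    apply monic_X_pow_add
    apply lt_of_le_of_lt (degree_sub_le _ _)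
    apply max_lt
    · exact lt_of_le_of_lt degree_one_le (by norm_num)
    · apply lt_of_le_of_lt (degree_mul_le _ _)
      apply lt_of_le_of_lt (add_le_add degree_C_le degree_X_le)
      norm_num
  have hmonic_h : h.Monic := monic_map_iff.mp (by rw [hgh]; exact hmonic_g)
  refine ⟨key1, ?_, ?_⟩
  · -- forward direction
    intro hall
    have hroots_g : ∀ w : ℂ, (h.map (algebraMap ℚ ℂ)).IsRoot w →
        ∃ m : ℕ, 0 < m ∧ w ^ m = 1 := by
      intro w hw
      rw [hgh, hg] at hw
      rw [IsRoot, Polynomial.eval_prod] at hw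
      obtain ⟨j, -, hj⟩ := Finset.prod_eq_zero_iff.mp hw
      simp only [eval_sub, eval_add, eval_mul, eval_pow, eval_X, eval_C, eval_one] at hj
      obtain ⟨z, m, hm, hzm, hα⟩ := hall j
      have hz0 : z ≠ 0 := by
        rintro rfl
        simp [zero_pow hm.ne'] at hzm
      have habs : ‖z‖ = 1 := Complex.norm_eq_one_of_pow_eq_one hzm hm.ne'
      have hconj : (starRingEnd ℂ) z = z⁻¹ := (Complex.inv_eq_conj habs).symm
      have h2α : 2 * α j = z + z⁻¹ := by
        rw [hα, hconj]; ring
      have hfac : (w - z) * (w - z⁻¹) = 0 := by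
        calc (w - z) * (w - z⁻¹) = w^2 - (2 * α j)*w + z*z⁻¹ := by rw [h2α]; ring
        _ = w^2 - (2 * α j)*w + 1 := by rw [mul_inv_cancel₀ hz0]
        _ = 0 := hj
      rcases mul_eq_zero.mp hfac with h1 | h2
      · exact ⟨m, hm, by rw [sub_eq_zero.mp h1]; exact hzm⟩
      · exact ⟨m, hm, by rw [sub_eq_zero.mp h2, inv_pow, hzm, inv_one]⟩
    obtain ⟨S, hS, hSeq⟩ := aux_cyclo h.natDegree h rfl hmonic_h hroots_g
    refine ⟨S, hS, ?_⟩
    rw [← hgh, hSeq, Polynomial.map_multiset_prod, Multiset.map_map]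
    simp [Function.comp, map_cyclotomic]
  · -- backward direction
    rintro ⟨S, hS, hSeq⟩ j
    have hdegp : 0 < (X^2 - C (2*α j)*X + 1 : Polynomial ℂ).degree := by
      have : (X^2 - C (2*α j)*X + 1 : Polynomial ℂ).degree = 2 := by
        compute_degree!
      rw [this]; norm_num
    obtain ⟨z, hz⟩ := Complex.exists_root hdegp
    have hz' : z^2 - 2*α j * z + 1 = 0 := by
      have := hz
      simp only [IsRoot, eval_sub, eval_add, eval_mul, eval_pow, eval_X, eval_C,
        eval_one] at this
      exact this
    have hgz : g.eval z = 0 := by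
      rw [hg, Polynomial.eval_prod]
      apply Finset.prod_eq_zero (Finset.mem_univ j)
      simp only [eval_sub, eval_add, eval_mul, eval_pow, eval_X, eval_C, eval_one]
      exact hz'
    rw [hSeq, eval_multiset_prod] at hgz
    have h0mem := Multiset.prod_eq_zero_iff.mp hgz
    rw [Multiset.map_map] at h0mem
    obtain ⟨m, hmS, hcyc0⟩ := Multiset.mem_map.mp h0mem
    have hm : 0 < m := hS m hmS
    have hzm : z ^ m = 1 := by
      obtain ⟨q, hq⟩ := cyclotomic.dvd_X_pow_sub_one m ℂ
      have hc : eval z (cyclotomic m ℂ) = 0 := hcyc0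
      have : eval z ((X:Polynomial ℂ)^m - 1) = 0 := by
        rw [hq, eval_mul, hc, zero_mul]
      simpa [sub_eq_zero] using this
    have hz0 : z ≠ 0 := by
      rintro rfl
      simp [zero_pow hm.ne'] at hzm
    have habs : ‖z‖ = 1 := Complex.norm_eq_one_of_pow_eq_one hzm hm.ne'
    have hconj : (starRingEnd ℂ) z = z⁻¹ := (Complex.inv_eq_conj habs).symm
    refine ⟨z, m, hm, hzm, ?_⟩
    rw [hconj]
    field_simp
    linear_combination -hz'
end

section
/- The numbers 1/(√2(1+√5)) and -1/(√2(1-√5)) are not real parts of roots of unity. -/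
open Polynomial

lemma quad_not_integral (r : ℝ) (hr : 4*r^2 - 6*r + 1 = 0)
    (hi : IsIntegral ℤ ((r : ℂ))) : False := by
  set β : ℂ := (r : ℂ) with hβdef
  have hβ : 4*β^2 - 6*β + 1 = 0 := by
    have := congrArg (fun x : ℝ => (x : ℂ)) hr
    push_cast at this
    simpa [hβdef] using this
  set p : ℤ[X] := C 4 * X ^ 2 + C (-6) * X + C 1 with hp
  have hpβ : aeval β p = 0 := by
    simp only [hp, map_add, map_mul, map_pow, map_ofNat, map_one, map_neg, aeval_C, aeval_X, algebraMap_int_eq, eq_intCast, map_intCast]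
    linear_combination hβ
  have hdvd : minpoly ℤ β ∣ p := minpoly.isIntegrallyClosed_dvd hi hpβ
  have hpdeg : p.natDegree = 2 := natDegree_quadratic (by norm_num)
  have hpne : p ≠ 0 := fun h => by simp [h] at hpdeg
  have hmon : (minpoly ℤ β).Monic := minpoly.monic hi
  have h1 : 1 ≤ (minpoly ℤ β).natDegree := minpoly.natDegree_pos hi
  have h2 : (minpoly ℤ β).natDegree ≤ 2 := hpdeg ▸ natDegree_le_of_dvd hdvd hpne
  interval_cases h : (minpoly ℤ β).natDegree
  · -- degree 1
    have hm := hmon.eq_X_add_C h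
    have := minpoly.aeval ℤ β
    rw [hm] at this
    simp only [map_add, aeval_X, aeval_C, algebraMap_int_eq, eq_intCast, map_intCast] at this
    set a := (minpoly ℤ β).coeff 0
    have hra : r = -(a : ℝ) := by
      have : β = -(a:ℂ) := by linear_combination this
      exact_mod_cast congrArg Complex.re this
    rw [hra] at hr
    have hz : (4*(-a)^2 - 6*(-a) + 1 : ℤ) = 0 := by exact_mod_cast hr
    have : 2 * (2*a^2 + 3*a) + 1 = 0 := by linear_combination hz
    omega
  · -- degree 2
    obtain ⟨k, hk⟩ := hdvd
    have hmne : minpoly ℤ β ≠ 0 := hmon.ne_zero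
    have hkne : k ≠ 0 := fun h0 => hpne (by simp [hk, h0])
    have hkdeg : k.natDegree = 0 := by
      have := natDegree_mul hmne hkne
      rw [← hk, hpdeg, h] at this
      omega
    obtain ⟨c, hc⟩ := natDegree_eq_zero.mp hkdeg
    have hc2 : c = 4 := by
      have := congrArg (fun q : ℤ[X] => q.coeff 2) hk
      have hlead : (minpoly ℤ β).coeff 2 = 1 := by
        have := hmon.coeff_natDegree
        rwa [h] at this
      simp only [hp, ← hc, coeff_mul_C, hlead, coeff_add, coeff_C_mul,
        coeff_X_pow, coeff_C, coeff_X] at this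
      norm_num at this
      omega
    have hc0 : (1:ℤ) = (minpoly ℤ β).coeff 0 * c := by
      have := congrArg (fun q : ℤ[X] => q.coeff 0) hk
      simpa [hp, ← hc, coeff_mul_C, coeff_add, coeff_C_mul,
        coeff_X_pow, coeff_C, coeff_X] using this
    rw [hc2] at hc0
    omega

lemma root_of_unity_integral {z : ℂ} {m : ℕ} (hm : 0 < m) (hz : z ^ m = 1) :
    IsIntegral ℤ z :=
  ⟨X ^ m - C 1, monic_X_pow_sub_C 1 hm.ne', by simp [hz]⟩

theorem not_real_part_root_of_unity_sqrt2_sqrt5 :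
    (¬ ∃ (z : ℂ) (m : ℕ), 0 < m ∧ z ^ m = 1 ∧
        z.re = 1 / (Real.sqrt 2 * (1 + Real.sqrt 5))) ∧
    (¬ ∃ (z : ℂ) (m : ℕ), 0 < m ∧ z ^ m = 1 ∧
        z.re = -(1 / (Real.sqrt 2 * (1 - Real.sqrt 5)))) := by
  have h2 : Real.sqrt 2 ^ 2 = 2 := Real.sq_sqrt (by norm_num)
  have h5 : Real.sqrt 5 ^ 2 = 5 := Real.sq_sqrt (by norm_num)
  have h2pos : 0 < Real.sqrt 2 := Real.sqrt_pos.mpr (by norm_num)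
  have h5big : (2:ℝ) ≤ Real.sqrt 5 := by
    nlinarith [Real.sqrt_nonneg 5]
  have key : ∀ (z : ℂ) (m : ℕ), 0 < m → z ^ m = 1 →
      4 * (4 * z.re ^ 2) ^ 2 - 6 * (4 * z.re ^ 2) + 1 = 0 → False := by
    intro z m hm hzm hr
    apply quad_not_integral (4 * z.re ^ 2) hr
    have hi : IsIntegral ℤ ((z + (starRingEnd ℂ) z) ^ 2) :=
      ((root_of_unity_integral hm hzm).add
        (root_of_unity_integral hm (by rw [← map_pow, hzm, map_one]))).pow 2
    have he : (z + (starRingEnd ℂ) z) ^ 2 = ((4 * z.re ^ 2 : ℝ) : ℂ) := by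
      rw [Complex.add_conj]
      push_cast
      ring
    rwa [he] at hi
  constructor
  · rintro ⟨z, m, hm, hzm, hre⟩
    refine key z m hm hzm ?_
    have hD : (Real.sqrt 2 * (1 + Real.sqrt 5))^2 = 12 + 4*Real.sqrt 5 := by
      rw [mul_pow, h2]
      linear_combination 2*h5
    have hre2 : z.re ^ 2 = 1 / (12 + 4*Real.sqrt 5) := by
      rw [hre, div_pow, one_pow, hD]
    rw [hre2]
    have hDne : (12 + 4*Real.sqrt 5 : ℝ) ≠ 0 := by positivity
    field_simp
    linear_combination 16*h5
  · rintro ⟨z, m, hm, hzm, hre⟩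
    refine key z m hm hzm ?_
    have hD : (Real.sqrt 2 * (1 - Real.sqrt 5))^2 = 12 - 4*Real.sqrt 5 := by
      rw [mul_pow, h2]
      linear_combination 2*h5
    have hre2 : z.re ^ 2 = 1 / (12 - 4*Real.sqrt 5) := by
      rw [hre, neg_pow, div_pow, one_pow, hD]
      ring
    rw [hre2]
    have hDne : (12 - 4*Real.sqrt 5 : ℝ) ≠ 0 := by
      nlinarith [h5]
    field_simp
    linear_combination 16*h5
end
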